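/- For every ε > 0, the infinite product ∏_{n=2}^∞ Erf(√((1+ε) ln n)) converges to a strictly positive limit, where Erf(x) = (1/√π) ∫_{-x}^{x} e^{-ξ²} dξ. -/

import Mathlib

open MeasureTheory Real Filter

/-- The Gauss error function `Erf x = (2/√π) ∫ t in 0..x, e^{-t²}`. -/
noncomputable def Erf (x : ℝ) : ℝ :=
  (2 / Real.sqrt π) * ∫ t in (0 : ℝ)..x, Real.exp (-t ^ 2)

lemma integral_Ioi_mul_exp {x : ℝ} :
    ∫ t in Set.Ioi x, t * Real.exp (-t^2) = Real.exp (-x^2) / 2 := by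
  have hderiv : ∀ t ∈ Set.Ici x, HasDerivAt (fun t : ℝ => -(Real.exp (-t^2) / 2))
      (t * Real.exp (-t^2)) t := by
    intro t _
    have h1 : HasDerivAt (fun t : ℝ => -t^2) (-(2*t)) t := by
      simpa using (hasDerivAt_pow 2 t).fun_neg
    have h2 := (h1.exp.div_const 2).fun_neg
    exact h2.congr_deriv (by ring)
  have hint : IntegrableOn (fun t : ℝ => t * Real.exp (-t^2)) (Set.Ioi x) := by
    have := integrable_mul_exp_neg_mul_sq (b := 1) one_pos
    simpa using this.integrableOn
  have htend : Tendsto (fun t : ℝ => -(Real.exp (-t^2) / 2)) atTop (nhds 0) := by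
    have h1 : Tendsto (fun t : ℝ => -t^2) atTop atBot := by
      simpa using tendsto_neg_atTop_atBot.comp (tendsto_pow_atTop (n := 2) two_ne_zero)
    have := ((Real.tendsto_exp_atBot.comp h1).div_const 2).neg
    simpa using this
  have := integral_Ioi_of_hasDerivAt_of_tendsto' hderiv hint htend
  rw [this]; ring

lemma erf_bounds {x : ℝ} (hx : 0 < x) :
    0 < Erf x ∧ Erf x ≤ 1 ∧ 1 - Erf x ≤ Real.exp (-x^2) / (x * Real.sqrt π) := by
  have hπ : 0 < Real.sqrt π := Real.sqrt_pos.mpr pi_pos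
  have hIg : Integrable (fun t : ℝ => Real.exp (-t^2)) := by
    have := integrable_exp_neg_mul_sq (b := 1) one_pos; simpa using this
  have hIoi0 : ∫ t in Set.Ioi (0:ℝ), Real.exp (-t^2) = Real.sqrt π / 2 := by
    have := integral_gaussian_Ioi 1; simpa using this
  -- split
  have hsplit : (∫ t in Set.Ioc 0 x, Real.exp (-t^2)) + ∫ t in Set.Ioi x, Real.exp (-t^2)
      = Real.sqrt π / 2 := by
    rw [← hIoi0, ← Set.Ioc_union_Ioi_eq_Ioi hx.le]
    exact (setIntegral_union (Set.Ioc_disjoint_Ioi le_rfl) measurableSet_Ioi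
      hIg.integrableOn hIg.integrableOn).symm
  have hErf : Erf x = (2 / Real.sqrt π) * ∫ t in Set.Ioc 0 x, Real.exp (-t^2) := by
    rw [Erf, intervalIntegral.integral_of_le hx.le]
  have hpos0 : 0 < ∫ t in (0:ℝ)..x, Real.exp (-t^2) := by
    apply intervalIntegral.intervalIntegral_pos_of_pos_on
    · exact (Real.continuous_exp.comp (continuous_pow 2).neg).intervalIntegrable 0 x
    · intro t _; exact Real.exp_pos _
    · exact hx
  have htail_nonneg : 0 ≤ ∫ t in Set.Ioi x, Real.exp (-t^2) :=
    setIntegral_nonneg measurableSet_Ioi fun t _ => (Real.exp_pos _).le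
  have htail_le : (∫ t in Set.Ioi x, Real.exp (-t^2)) ≤ Real.exp (-x^2) / (2 * x) := by
    have hImul : Integrable (fun t : ℝ => t * Real.exp (-t^2)) := by
      have := integrable_mul_exp_neg_mul_sq (b := 1) one_pos; simpa using this
    have hle : ∀ t ∈ Set.Ioi x, Real.exp (-t^2) ≤ x⁻¹ * (t * Real.exp (-t^2)) := by
      intro t ht
      have htx : x ≤ t := le_of_lt ht
      have h1 : (1:ℝ) ≤ x⁻¹ * t := by
        rw [inv_mul_eq_div, le_div_iff₀ hx]; linarith
      nlinarith [Real.exp_pos (-t^2)]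
    have hmono : (∫ t in Set.Ioi x, Real.exp (-t^2))
        ≤ ∫ t in Set.Ioi x, x⁻¹ * (t * Real.exp (-t^2)) :=
      setIntegral_mono_on hIg.integrableOn ((hImul.const_mul x⁻¹).integrableOn)
        measurableSet_Ioi hle
    rw [integral_const_mul, integral_Ioi_mul_exp] at hmono
    calc (∫ t in Set.Ioi x, Real.exp (-t^2)) ≤ x⁻¹ * (Real.exp (-x^2)/2) := hmono
    _ = Real.exp (-x^2) / (2*x) := by field_simp
  constructor
  · rw [Erf]; positivity
  constructor
  · rw [hErf]
    have h1 : (∫ t in Set.Ioc 0 x, Real.exp (-t^2)) ≤ Real.sqrt π / 2 := by linarith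
    rw [div_mul_eq_mul_div, div_le_one hπ] at *
    nlinarith
  · rw [hErf]
    have key : (∫ t in Set.Ioc 0 x, Real.exp (-t^2))
        ≥ Real.sqrt π / 2 - Real.exp (-x^2) / (2*x) := by linarith
    have h2 : (0:ℝ) < 2 / Real.sqrt π := by positivity
    have hEexp := Real.exp_pos (-x^2)
    rw [ge_iff_le, sub_le_iff_le_add] at key
    have := mul_le_mul_of_nonneg_left key (le_of_lt h2)
    have hid : (2 / Real.sqrt π) * (Real.sqrt π / 2) = 1 := by field_simp
    have h3 : (2 / Real.sqrt π) * ((∫ t in Set.Ioc 0 x, Real.exp (-t^2)) + Real.exp (-x^2)/(2*x))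
        = (2 / Real.sqrt π) * (∫ t in Set.Ioc 0 x, Real.exp (-t^2))
          + Real.exp (-x^2) / (x * Real.sqrt π) := by
      field_simp
    rw [h3, hid] at this
    linarith

/-- For every `ε > 0`, the infinite product `∏_{n=2}^∞ Erf (√((1+ε) ln n))`
converges to a strictly positive limit. -/

theorem erf_prod_pos_of_eps_pos (ε : ℝ) (hε : 0 < ε) :
    ∃ P : ℝ, 0 < P ∧
      Tendsto (fun N : ℕ => ∏ n ∈ Finset.Icc 2 N, Erf (Real.sqrt ((1 + ε) * Real.log n)))
        atTop (nhds P) := by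
  set f : ℕ → ℝ := fun n => Erf (Real.sqrt ((1 + ε) * Real.log n)) with hf
  have key : ∀ n : ℕ, 2 ≤ n → 1/2 ≤ f n ∧ f n ≤ 1 ∧ 1 - f n ≤ (n:ℝ) ^ (-(1+ε)) := by
    intro n hn
    have hn2 : (2:ℝ) ≤ (n:ℝ) := by exact_mod_cast hn
    have hlog2 : (0.6931471803 : ℝ) < Real.log 2 := Real.log_two_gt_d9
    have hlogn : Real.log 2 ≤ Real.log n := Real.log_le_log (by norm_num) hn2
    have hlogn0 : 0 < Real.log n := by linarith
    have hxsq_pos : 0 < (1+ε) * Real.log n := by positivity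
    set x := Real.sqrt ((1+ε) * Real.log n) with hxdef
    have hx : 0 < x := Real.sqrt_pos.mpr hxsq_pos
    obtain ⟨h1, h2, h3⟩ := erf_bounds hx
    have hx2 : x^2 = (1+ε) * Real.log n := Real.sq_sqrt hxsq_pos.le
    have hexp : Real.exp (-x^2) = (n:ℝ) ^ (-(1+ε)) := by
      rw [hx2, Real.rpow_def_of_pos (by linarith : (0:ℝ) < (n:ℝ))]
      congr 1; ring
    have hxpi : 1 ≤ x * Real.sqrt π := by
      rw [hxdef, ← Real.sqrt_mul hxsq_pos.le, Real.one_le_sqrt]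
      nlinarith [Real.pi_gt_three]
    have hrle : (n:ℝ) ^ (-(1+ε)) ≤ 1/2 := by
      have e1 : (n:ℝ) ^ (-(1+ε)) ≤ (n:ℝ) ^ (-1 : ℝ) :=
        Real.rpow_le_rpow_of_exponent_le (by linarith) (by linarith)
      have e2 : (n:ℝ) ^ (-1 : ℝ) = ((n:ℝ))⁻¹ := Real.rpow_neg_one _
      have e3 : ((n:ℝ))⁻¹ ≤ 1/2 := by
        rw [inv_le_comm₀ (by linarith) (by norm_num)]; norm_num; linarith
      linarith
    have h3' : 1 - f n ≤ (n:ℝ) ^ (-(1+ε)) := by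
      calc 1 - f n ≤ Real.exp (-x^2) / (x * Real.sqrt π) := h3
      _ ≤ Real.exp (-x^2) / 1 := by
          apply div_le_div_of_nonneg_left (Real.exp_pos _).le one_pos hxpi
      _ = (n:ℝ) ^ (-(1+ε)) := by rw [div_one, hexp]
    exact ⟨by linarith, h2, h3'⟩
  -- summability of logs
  have hfpos : ∀ k : ℕ, 0 < f (k+2) := fun k => lt_of_lt_of_le (by norm_num)
    (key (k+2) (by omega)).1
  have hsum : Summable (fun k : ℕ => Real.log (f (k+2))) := by
    have hS : Summable (fun n : ℕ => 2 * (n:ℝ)^(-(1+ε))) :=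
      (Real.summable_nat_rpow.mpr (by linarith)).mul_left 2
    have hS2 : Summable (fun k : ℕ => 2 * (((k+2:ℕ)):ℝ)^(-(1+ε))) :=
      (summable_nat_add_iff 2).mpr hS
    apply Summable.of_abs
    apply Summable.of_nonneg_of_le (fun k => abs_nonneg _) _ hS2
    intro k
    obtain ⟨k1, k2, k3⟩ := key (k+2) (by omega)
    set a := f (k+2) with ha
    have ha0 : 0 < a := by linarith
    have hlog_nonpos : Real.log a ≤ 0 := Real.log_nonpos (by linarith) k2
    rw [abs_of_nonpos hlog_nonpos]
    have hl1 : -Real.log a = Real.log a⁻¹ := by rw [Real.log_inv]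
    have hl2 : Real.log a⁻¹ ≤ a⁻¹ - 1 := Real.add_one_le_exp _ |>.trans_eq (by rw [Real.exp_log (by positivity)]) |> fun h => by
      have := Real.log_le_sub_one_of_pos (show (0:ℝ) < a⁻¹ by positivity)
      linarith [this]
    have hinv : a * a⁻¹ = 1 := mul_inv_cancel₀ (ne_of_gt ha0)
    have hl3 : a⁻¹ - 1 ≤ 2 * (1 - a) := by nlinarith
    have : 1 - a ≤ (((k+2:ℕ)):ℝ)^(-(1+ε)) := by exact_mod_cast k3
    linarith [hl1, hl2, hl3]
  -- product
  set S := ∑' k, Real.log (f (k+2)) with hS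
  have hprod : HasProd (fun k => f (k+2)) (Real.exp S) := by
    have heq : (fun k => f (k+2)) = (Real.exp ∘ fun k => Real.log (f (k+2))) :=
      funext fun k => (Real.exp_log (hfpos k)).symm
    rw [heq]
    exact hsum.hasSum.rexp
  refine ⟨Real.exp S, Real.exp_pos _, ?_⟩
  have tend := hprod.tendsto_prod_nat
  have comp := tend.comp (tendsto_sub_atTop_nat 1)
  have hEq : ∀ N : ℕ, ((fun n => ∏ i ∈ Finset.range n, f (i+2)) ∘ (fun N => N - 1)) N
      = ∏ n ∈ Finset.Icc 2 N, f n := by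
    intro N
    rw [Function.comp_apply, ← Finset.Ico_add_one_right_eq_Icc, Finset.prod_Ico_eq_prod_range,
      show N + 1 - 2 = N - 1 from by omega]
    exact Finset.prod_congr rfl fun i _ => by rw [add_comm]
  exact comp.congr hEq
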